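/- Let G be a finite simple connected graph of order n ≥ 3 that is not isomorphic to a cycle Cₙ for any n. Then the distinguishing number of the subdivision graph of G is at most the total distinguishing number of G: D(S(G)) ≤ D''(G). -/

import Mathlib

open SimpleGraph

/-- The middle graph `M(G)`: vertices are `V(G) ⊕ E(G)`; two edges are adjacent
iff they are distinct and share an endpoint; a vertex and an edge are adjacent
iff the vertex is incident to the edge. -/
def middleGraph {V : Type*} (G : SimpleGraph V) : SimpleGraph (V ⊕ G.edgeSet) :=
  SimpleGraph.fromRel fun x y =>
    match x, y with
    | Sum.inr e, Sum.inr f => e ≠ f ∧ ∃ v, v ∈ (e : Sym2 V) ∧ v ∈ (f : Sym2 V)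
    | Sum.inl v, Sum.inr e => v ∈ (e : Sym2 V)
    | _, _ => False

/-- The subdivision graph `S(G)`: vertices are `V(G) ⊕ E(G)`; `v ∈ V(G)` and
`e ∈ E(G)` are adjacent iff `v` is incident to `e`. -/
def subdivisionGraph {V : Type*} (G : SimpleGraph V) : SimpleGraph (V ⊕ G.edgeSet) :=
  SimpleGraph.fromRel fun x y =>
    match x, y with
    | Sum.inl v, Sum.inr e => v ∈ (e : Sym2 V)
    | _, _ => False

/-- The endline graph `G⁺`: to each vertex `v` of `G` (coded `Sum.inl v`) we attach a new
pendant vertex (coded `Sum.inr v`) via a new (endline) edge. -/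
def endlineGraph {V : Type*} (G : SimpleGraph V) : SimpleGraph (V ⊕ V) :=
  SimpleGraph.fromRel fun x y =>
    match x, y with
    | Sum.inl u, Sum.inl v => G.Adj u v
    | Sum.inl v, Sum.inr u => v = u
    | _, _ => False

/-- A vertex coloring is distinguishing if the only automorphism preserving it is the identity. -/
def IsDistinguishingVertexColoring {V α : Type*} (G : SimpleGraph V) (c : V → α) : Prop :=
  ∀ φ : G ≃g G, (∀ v, c (φ v) = c v) → ∀ v, φ v = v

/-- A proper vertex coloring assigns different colors to adjacent vertices. -/
def IsProperVertexColoring {V α : Type*} (G : SimpleGraph V) (c : V → α) : Prop :=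
  ∀ u v, G.Adj u v → c u ≠ c v

/-- The distinguishing number `D(G)`. -/
noncomputable def distinguishingNumber {V : Type*} (G : SimpleGraph V) : ℕ :=
  sInf {r | ∃ c : V → Fin r, IsDistinguishingVertexColoring G c}

/-- The distinguishing chromatic number `χ_D(G)`. -/
noncomputable def distinguishingChromaticNumber {V : Type*} (G : SimpleGraph V) : ℕ :=
  sInf {r | ∃ c : V → Fin r,
    IsProperVertexColoring G c ∧ IsDistinguishingVertexColoring G c}

/-- An edge coloring is distinguishing if the only automorphism preserving it is the identity. -/
def IsDistinguishingEdgeColoring {V α : Type*} (G : SimpleGraph V) (c : G.edgeSet → α) : Prop :=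
  ∀ φ : G ≃g G, (∀ e, c (φ.mapEdgeSet e) = c e) → ∀ v, φ v = v

/-- A proper edge coloring assigns different colors to distinct edges sharing an endpoint. -/
def IsProperEdgeColoring {V α : Type*} (G : SimpleGraph V) (c : G.edgeSet → α) : Prop :=
  ∀ e f : G.edgeSet, e ≠ f → (∃ v, v ∈ (e : Sym2 V) ∧ v ∈ (f : Sym2 V)) → c e ≠ c f

/-- The distinguishing index `D'(G)`. -/
noncomputable def distinguishingIndex {V : Type*} (G : SimpleGraph V) : ℕ :=
  sInf {r | ∃ c : G.edgeSet → Fin r, IsDistinguishingEdgeColoring G c}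

/-- The distinguishing chromatic index `χ'_D(G)`. -/
noncomputable def distinguishingChromaticIndex {V : Type*} (G : SimpleGraph V) : ℕ :=
  sInf {r | ∃ c : G.edgeSet → Fin r,
    IsProperEdgeColoring G c ∧ IsDistinguishingEdgeColoring G c}

/-- The total distinguishing number `D''(G)`: the least `d` such that there is a (not
necessarily proper) coloring of vertices and edges with `d` colors preserved only by
the identity automorphism. -/
noncomputable def totalDistinguishingNumber {V : Type*} (G : SimpleGraph V) : ℕ :=
  sInf {d | ∃ (cV : V → Fin d) (cE : G.edgeSet → Fin d),
    ∀ φ : G ≃g G,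
      ((∀ v, cV (φ v) = cV v) ∧ (∀ e, cE (φ.mapEdgeSet e) = cE e)) → ∀ v, φ v = v}

section Basic
variable {V : Type*} {G : SimpleGraph V}

open Sum

@[simp] lemma sadj_inl_inr {v : V} {e : G.edgeSet} :
    (subdivisionGraph G).Adj (inl v) (inr e) ↔ v ∈ (e : Sym2 V) := by
  simp [subdivisionGraph, SimpleGraph.fromRel_adj]

@[simp] lemma sadj_inr_inl {v : V} {e : G.edgeSet} :
    (subdivisionGraph G).Adj (inr e) (inl v) ↔ v ∈ (e : Sym2 V) := by
  rw [SimpleGraph.adj_comm]; exact sadj_inl_inr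

@[simp] lemma sadj_inl_inl {u v : V} :
    ¬ (subdivisionGraph G).Adj (inl u) (inl v) := by
  simp [subdivisionGraph, SimpleGraph.fromRel_adj]

@[simp] lemma sadj_inr_inr {e f : G.edgeSet} :
    ¬ (subdivisionGraph G).Adj (inr e) (inr f) := by
  simp [subdivisionGraph, SimpleGraph.fromRel_adj]

lemma sadj_isLeft {x y : V ⊕ G.edgeSet} (h : (subdivisionGraph G).Adj x y) :
    x.isLeft = !y.isLeft := by
  cases x with
  | inl v => cases y with
    | inl w => exact absurd h sadj_inl_inl
    | inr e => rfl
  | inr e => cases y with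
    | inl w => rfl
    | inr f => exact absurd h sadj_inr_inr

end Basic

section Conn
variable {V : Type*} {G : SimpleGraph V}
open Sum

lemma sreach_of_adj {u w : V} (h : G.Adj u w) :
    (subdivisionGraph G).Reachable (inl u) (inl w) := by
  have he : s(u, w) ∈ G.edgeSet := h
  have h1 : (subdivisionGraph G).Adj (inl u) (inr ⟨s(u,w), he⟩) := by
    simp [Sym2.mem_iff]
  have h2 : (subdivisionGraph G).Adj (inr (⟨s(u,w), he⟩ : G.edgeSet)) (inl w) := by
    simp [Sym2.mem_iff]
  exact (h1.reachable).trans h2.reachable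

lemma sreach_inl_walk {u w : V} (p : G.Walk u w) :
    (subdivisionGraph G).Reachable (inl u) (inl w) := by
  induction p with
  | nil => rfl
  | cons h _ ih => exact (sreach_of_adj h).trans ih

lemma spreconn (hconn : G.Connected) :
    (subdivisionGraph G).Preconnected := by
  have key : ∀ x : V ⊕ G.edgeSet, ∃ v : V, (subdivisionGraph G).Reachable x (inl v) := by
    rintro (v | e)
    · exact ⟨v, .refl _⟩
    · obtain ⟨z, hz⟩ := e
      induction z using Sym2.ind with
      | _ a b =>
        refine ⟨a, SimpleGraph.Adj.reachable ?_⟩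
        simp [Sym2.mem_iff]
  intro x y
  obtain ⟨a, ha⟩ := key x
  obtain ⟨b, hb⟩ := key y
  exact ha.trans ((sreach_inl_walk (hconn.preconnected a b).some).trans hb.symm)

lemma parity_const_walk (φ : subdivisionGraph G ≃g subdivisionGraph G)
    {x y : V ⊕ G.edgeSet} (p : (subdivisionGraph G).Walk x y) :
    ((φ x).isLeft == x.isLeft) = ((φ y).isLeft == y.isLeft) := by
  induction p with
  | nil => rfl
  | cons h _ ih =>
    rename_i a b c h' 
    refine Eq.trans ?_ ih
    have h1 := sadj_isLeft h
    have h2 := sadj_isLeft (φ.map_adj_iff.mpr h)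
    rw [h1, h2]
    cases (φ b).isLeft <;> cases b.isLeft <;> rfl

/-- parity is constant for an automorphism of the subdivision graph -/
lemma parity_const (hconn : G.Connected)
    (φ : subdivisionGraph G ≃g subdivisionGraph G) (x y : V ⊕ G.edgeSet) :
    ((φ x).isLeft == x.isLeft) = ((φ y).isLeft == y.isLeft) :=
  parity_const_walk φ (spreconn hconn x y).some

end Conn

section Cycle
variable {V : Type*}

lemma pair_eq_of_mem {a b x y : V} (hab : a ≠ b) (hxy : x ≠ y)
    (hx : x ∈ ({a, b} : Set V)) (hy : y ∈ ({a, b} : Set V)) :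
    ({a, b} : Set V) = {x, y} := by
  rcases hx with rfl | rfl <;> rcases hy with rfl | rfl <;>
    first
    | rfl
    | exact absurd rfl hxy
    | exact Set.pair_comm _ _

lemma two_regular_cycle [Fintype V] [Nonempty V] {G : SimpleGraph V}
    (hconn : G.Connected)
    (hdeg : ∀ v : V, ∃ a b : V, a ≠ b ∧ G.neighborSet v = {a, b}) :
    ∃ n, Nonempty (G ≃g SimpleGraph.cycleGraph n) := by
  classical
  -- membership helper
  have hmem : ∀ v z, G.Adj v z → ∀ a b, a ≠ b → G.neighborSet v = {a, b} →
      z = a ∨ z = b := by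
    intro v z hz a b _ hs
    have : z ∈ G.neighborSet v := hz
    rw [hs] at this
    simpa using this
  -- other-neighbour
  have hex : ∀ x v : V, ∃ y, G.Adj v y ∧ y ≠ x := by
    intro x v
    obtain ⟨a, b, hab, hs⟩ := hdeg v
    have ha : G.Adj v a := by rw [← SimpleGraph.mem_neighborSet, hs]; simp
    have hb : G.Adj v b := by rw [← SimpleGraph.mem_neighborSet, hs]; simp
    by_cases hxa : x = a
    · exact ⟨b, hb, by rw [hxa]; exact hab.symm⟩
    · exact ⟨a, ha, fun h => hxa h.symm⟩
  choose nxt hnxt1 hnxt2 using hex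
  have huniq : ∀ x v y, G.Adj v x → G.Adj v y → y ≠ x → y = nxt x v := by
    intro x v y hvx hvy hyx
    obtain ⟨a, b, hab, hs⟩ := hdeg v
    rcases hmem v x hvx a b hab hs with h1 | h1 <;>
      rcases hmem v y hvy a b hab hs with h2 | h2 <;>
      rcases hmem v _ (hnxt1 x v) a b hab hs with h3 | h3 <;>
      first
      | exact h2.trans h3.symm
      | exact absurd (h2.trans h1.symm) hyx
      | exact absurd (h3.trans h1.symm) (hnxt2 x v)
  -- the walk sequence
  obtain ⟨v0⟩ := ‹Nonempty V›
  set v1 : V := nxt v0 v0 with hv1def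
  have hv01 : G.Adj v0 v1 := hnxt1 v0 v0
  set F : V × V → V × V := fun p => (p.2, nxt p.1 p.2) with hF
  set f : ℕ → V := fun k => (F^[k] (v0, v1)).1 with hfdef
  have hfsnd : ∀ k, (F^[k] (v0, v1)).2 = f (k + 1) := by
    intro k
    simp [hfdef, Function.iterate_succ_apply', hF]
  have hf0 : f 0 = v0 := rfl
  have hf1 : f 1 = v1 := rfl
  have hstep : ∀ k, f (k + 2) = nxt (f k) (f (k + 1)) := by
    intro k
    show (F^[k+1+1] (v0, v1)).1 = _
    rw [Function.iterate_succ_apply' F (k+1)]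
    show (F^[k+1] (v0, v1)).2 = _
    rw [Function.iterate_succ_apply' F k]
    show nxt (F^[k] (v0, v1)).1 (F^[k] (v0, v1)).2 = _
    rw [hfsnd k]
  have hadj : ∀ k, G.Adj (f k) (f (k + 1)) := by
    intro k
    cases k with
    | zero => exact hv01
    | succ k => rw [hstep k]; exact hnxt1 _ _
  have hne2 : ∀ k, f (k + 2) ≠ f k := by
    intro k; rw [hstep k]; exact hnxt2 _ _
  have hback : ∀ k, f k = nxt (f (k + 2)) (f (k + 1)) :=
    fun k => huniq _ _ _ (hadj (k + 1)) (hadj k).symm (Ne.symm (hne2 k))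
  -- forward propagation of agreement
  have hfwd : ∀ a b, f a = f b → f (a + 1) = f (b + 1) →
      ∀ m, f (a + m) = f (b + m) ∧ f (a + m + 1) = f (b + m + 1) := by
    intro a b h0 h1 m
    induction m with
    | zero => exact ⟨h0, h1⟩
    | succ m ih =>
      refine ⟨by rw [show a + (m+1) = a + m + 1 from rfl, show b + (m+1) = b + m + 1 from rfl,
        ih.2], ?_⟩
      rw [show a + (m+1) + 1 = (a + m) + 2 from rfl, show b + (m+1) + 1 = (b + m) + 2 from rfl,
        hstep, hstep, ih.1, ih.2]
  -- backward propagation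
  have hbwd : ∀ a b m, f (a + m) = f (b + m) → f (a + m + 1) = f (b + m + 1) →
      f a = f b ∧ f (a + 1) = f (b + 1) := by
    intro a b m
    induction m with
    | zero => exact fun h0 h1 => ⟨h0, h1⟩
    | succ m ih =>
      intro h0 h1
      apply ih
      · rw [hback (a + m), hback (b + m)]
        rw [show a + m + 2 = a + (m+1) + 1 from rfl, show b + m + 2 = b + (m+1) + 1 from rfl,
          show a + m + 1 = a + (m+1) from rfl, show b + m + 1 = b + (m+1) from rfl, h0, h1]
      · exact h0
  -- agreement at two consecutive points gives a global period
  have hperiod : ∀ a b, a ≤ b → f a = f b → f (a + 1) = f (b + 1) →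
      ∀ m, f (m + (b - a)) = f m := by
    intro a b hab h0 h1 m
    rcases le_or_gt a m with hm | hm
    · have h := (hfwd a b h0 h1 (m - a)).1
      rw [show a + (m - a) = m from by omega] at h
      rw [show m + (b - a) = b + (m - a) from by omega]
      exact h.symm
    · have e0 : f (m + (b - a) + (a - m)) = f (m + (a - m)) := by
        rw [show m + (b - a) + (a - m) = b from by omega,
          show m + (a - m) = a from by omega]
        exact h0.symm
      have e1 : f (m + (b - a) + (a - m) + 1) = f (m + (a - m) + 1) := by
        rw [show m + (b - a) + (a - m) = b from by omega,
          show m + (a - m) = a from by omega]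
        exact h1.symm
      exact (hbwd _ _ _ e0 e1).1
  -- existence of a positive period
  have hper : ∃ p, 0 < p ∧ ∀ m, f (m + p) = f m := by
    obtain ⟨k, l, hkl, hfkl⟩ := Finite.exists_ne_map_eq_of_infinite
      (fun k : ℕ => F^[k] (v0, v1))
    rcases hkl.lt_or_gt with h | h
    · refine ⟨l - k, by omega, ?_⟩
      have h0 : f k = f l := congrArg Prod.fst hfkl
      have h1 : f (k + 1) = f (l + 1) := by
        rw [← hfsnd, ← hfsnd]; exact congrArg Prod.snd hfkl
      exact hperiod k l (le_of_lt h) h0 h1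
    · refine ⟨k - l, by omega, ?_⟩
      have h0 : f l = f k := (congrArg Prod.fst hfkl).symm
      have h1 : f (l + 1) = f (k + 1) := by
        rw [← hfsnd, ← hfsnd]; exact (congrArg Prod.snd hfkl).symm
      exact hperiod l k (le_of_lt h) h0 h1
  set p := Nat.find hper with hpdef
  obtain ⟨hppos, hp⟩ := Nat.find_spec hper
  rw [← hpdef] at hppos hp
  have hpmin : ∀ q, 0 < q → (∀ m, f (m + q) = f m) → p ≤ q := by
    intro q hq hfq
    exact Nat.find_le ⟨hq, hfq⟩
  -- iterated period and mod reduction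
  have hpm : ∀ m t, f (m + t * p) = f m := by
    intro m t
    induction t with
    | zero => simp
    | succ t ih => rw [show m + (t+1) * p = (m + t * p) + p from by ring, hp, ih]
  have hmod : ∀ m, f m = f (m % p) := by
    intro m
    conv_lhs => rw [show m = m % p + (m / p) * p from by
      rw [Nat.mod_add_div']]
    exact hpm _ _
  -- neighbour sets along the walk
  have hnbhd : ∀ k, G.neighborSet (f (k + 1)) = {f k, f (k + 2)} := by
    intro k
    obtain ⟨a, b, hab, hs⟩ := hdeg (f (k + 1))
    rw [hs]
    refine pair_eq_of_mem hab (Ne.symm (hne2 k)) ?_ ?_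
    · rw [← hs]; exact (hadj k).symm
    · rw [← hs]; exact hadj (k + 1)
  -- p is at least 3
  have hp3 : 3 ≤ p := by
    rcases Nat.lt_or_ge p 3 with h | h
    · exfalso
      have h12 : p = 1 ∨ p = 2 := by omega
      have h1 := hp 0
      rcases h12 with hpe | hpe <;> rw [hpe] at h1
      · exact (hadj 0).ne h1.symm
      · exact hne2 0 h1
    · exact h
  -- injectivity on a window of length p
  have hinj : ∀ i j, i < j → j - i < p → f i ≠ f j := by
    intro i j hij hlt heq
    set d := j - i with hddef
    have hd1 : 1 ≤ d := by omega
    rcases Nat.lt_or_ge d 3 with hd3 | hd3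
    · interval_cases d
      · -- d = 1 : adjacent vertices equal
        have : f (i + 1) = f i := by rw [show i + 1 = j from by omega]; exact heq.symm
        exact (hadj i).ne this.symm
      · have : f (i + 2) = f i := by rw [show i + 2 = j from by omega]; exact heq.symm
        exact hne2 i this
    · -- d ≥ 3 : look at neighbourhoods, after shifting up by p
      set i' := i + p with hi'def
      set j' := j + p with hj'def
      have hfi' : f i' = f j' := by rw [hp i, hp j]; exact heq
      have hn1 : G.neighborSet (f i') = {f (i' - 1), f (i' + 1)} := by
        have := hnbhd (i' - 1)
        rw [show i' - 1 + 1 = i' from by omega, show i' - 1 + 2 = i' + 1 from by omega] at this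
        exact this
      have hn2 : G.neighborSet (f j') = {f (j' - 1), f (j' + 1)} := by
        have := hnbhd (j' - 1)
        rw [show j' - 1 + 1 = j' from by omega, show j' - 1 + 2 = j' + 1 from by omega] at this
        exact this
      have hmem1 : f (i' + 1) ∈ ({f (j' - 1), f (j' + 1)} : Set V) := by
        rw [← hn2, ← hfi']
        exact hadj i'
      rcases hmem1 with hA | hA
      · -- reflection case : f (i'+1) = f (j'-1)
        have hrefl : ∀ m, m + 1 ≤ d → f (i' + m) = f (j' - m) ∧
            f (i' + m + 1) = f (j' - m - 1) := by
          intro m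
          induction m with
          | zero => intro _; exact ⟨hfi', by simpa using hA⟩
          | succ m ih =>
            intro hmd
            obtain ⟨e0, e1⟩ := ih (by omega)
            constructor
            · rw [show i' + (m+1) = i' + m + 1 from rfl, show j' - (m+1) = j' - m - 1 from by omega]
              exact e1
            · rw [show i' + (m+1) + 1 = (i' + m) + 2 from rfl, hstep, e0, e1]
              have hb := hback (j' - m - 2)
              rw [show j' - m - 2 + 2 = j' - m from by omega,
                show j' - m - 2 + 1 = j' - m - 1 from by omega] at hb
              rw [show j' - (m+1) - 1 = j' - m - 2 from by omega]
              exact hb.symm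
        rcases Nat.even_or_odd d with ⟨s, hs2⟩ | ⟨s, hs2⟩
        · -- d = 2s : f (i'+s+1) = f (i'+s-1) contradicts hne2
          have h1 := (hrefl s (by omega)).2
          rw [show j' - s - 1 = i' + s - 1 from by omega] at h1
          have := hne2 (i' + s - 1)
          rw [show i' + s - 1 + 2 = i' + s + 1 from by omega] at this
          exact this h1
        · -- d = 2s+1 : f (i'+s) = f (i'+s+1) contradicts adjacency
          have h1 := (hrefl s (by omega)).1
          rw [show j' - s = i' + s + 1 from by omega] at h1
          exact (hadj (i' + s)).ne h1
      · -- period case : f (i'+1) = f (j'+1), giving period d < p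
        have := hperiod i' j' (by omega) hfi' hA
        rw [show j' - i' = d from by omega] at this
        have := hpmin d (by omega) this
        omega
  -- surjectivity
  have hclosure : ∀ u w, G.Adj u w → (∃ m, f m = u) → ∃ m, f m = w := by
    rintro u w huw ⟨m, rfl⟩
    have hup : f (m + p) = f m := hp m
    have hnb : G.neighborSet (f (m + p)) = {f (m + p - 1), f (m + p + 1)} := by
      have := hnbhd (m + p - 1)
      rw [show m + p - 1 + 1 = m + p from by omega,
        show m + p - 1 + 2 = m + p + 1 from by omega] at this
      exact this
    have : w ∈ G.neighborSet (f (m + p)) := by rw [hup]; exact huw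
    rw [hnb] at this
    rcases this with h | h
    · exact ⟨m + p - 1, h.symm⟩
    · exact ⟨m + p + 1, h.symm⟩
  have hwalk : ∀ u w : V, G.Walk u w → (∃ m, f m = u) → ∃ m, f m = w := by
    intro u w pw
    induction pw with
    | nil => exact id
    | cons h _ ih => exact fun hu => ih (hclosure _ _ h hu)
  have hsurj : ∀ w : V, ∃ m, m < p ∧ f m = w := by
    intro w
    obtain ⟨m, hm⟩ := hwalk v0 w (hconn.preconnected v0 w).some ⟨0, rfl⟩
    exact ⟨m % p, Nat.mod_lt _ hppos, by rw [← hmod]; exact hm⟩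
  -- the bijection
  have hbij : Function.Bijective (fun i : Fin p => f i.val) := by
    constructor
    · intro i j hij
      by_contra hne
      rcases Ne.lt_or_gt (fun h : (i:Fin p) = j => hne h) with h | h
      · exact hinj i.val j.val h (by omega) hij
      · exact hinj j.val i.val h (by omega) hij.symm
    · intro w
      obtain ⟨m, hmp, hm⟩ := hsurj w
      exact ⟨⟨m, hmp⟩, hm⟩
  haveI : NeZero p := ⟨by omega⟩
  have hone : ((1 : Fin p) : ℕ) = 1 := by
    rw [Fin.val_one']
    exact Nat.mod_eq_of_lt (by omega)
  -- Fin index helpers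
  have hvadd : ∀ i : Fin p, ((i + 1 : Fin p) : ℕ) = (i.val + 1) % p := by
    intro i
    rw [Fin.val_add, hone]
  have hvsub : ∀ i : Fin p, ((i - 1 : Fin p) : ℕ) = (i.val + p - 1) % p := by
    intro i
    rw [Fin.sub_def, hone]
    simp only []
    congr 1
    omega
  -- injectivity at the level of indices < p
  have hinj' : ∀ a b : ℕ, a < p → b < p → f a = f b → a = b := by
    intro a b ha hb hab
    by_contra hne
    rcases Nat.lt_or_ge a b with h | h
    · exact hinj a b h (by omega) hab
    · exact hinj b a (by omega) (by omega) hab.symm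
  refine ⟨p, ⟨?_⟩⟩
  refine SimpleGraph.Iso.symm ⟨Equiv.ofBijective (fun i : Fin p => f i.val) hbij, ?_⟩
  intro i j
  simp only [Equiv.ofBijective_apply]
  rw [SimpleGraph.cycleGraph_adj']
  constructor
  · -- G adjacency implies cycle adjacency
    intro hadjij
    have hnb : G.neighborSet (f (i.val + p)) = {f (i.val + p - 1), f (i.val + p + 1)} := by
      have := hnbhd (i.val + p - 1)
      rw [show i.val + p - 1 + 1 = i.val + p from by omega,
        show i.val + p - 1 + 2 = i.val + p + 1 from by omega] at this
      exact this
    have hmemj : f j.val ∈ G.neighborSet (f (i.val + p)) := by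
      rw [hp i.val]; exact hadjij
    rw [hnb] at hmemj
    rcases hmemj with h | h
    · -- f j = f (i + p - 1), i.e. j = i - 1
      left
      have hj : j.val = (i.val + p - 1) % p := by
        apply hinj' _ _ j.isLt (Nat.mod_lt _ hppos)
        rw [← hmod]; exact h
      have : j = i - 1 := by
        apply Fin.ext
        rw [hvsub, hj]
      rw [this, show i - (i - 1) = (1 : Fin p) from by abel, hone]
    · -- f j = f (i + p + 1), i.e. j = i + 1
      right
      have hj : j.val = (i.val + 1) % p := by
        apply hinj' _ _ j.isLt (Nat.mod_lt _ hppos)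
        rw [← hmod]
        rw [show i.val + p + 1 = (i.val + 1) + p from by omega, hp] at h
        exact h
      have : j = i + 1 := by
        apply Fin.ext
        rw [hvadd, hj]
      rw [this, show i + 1 - i = (1 : Fin p) from by abel, hone]
  · -- cycle adjacency implies G adjacency
    intro hc
    rcases hc with h | h
    · -- i - j = 1, i.e. i = j + 1
      have hij : i = j + 1 := by
        have h1 : i - j = 1 := Fin.ext (by rw [h, hone])
        have := sub_eq_iff_eq_add.mp h1
        rwa [add_comm] at this
      have hival : i.val = (j.val + 1) % p := by rw [hij, hvadd]
      have : f i.val = f (j.val + 1) := by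
        rw [hival, ← hmod]
      rw [this]
      exact (hadj j.val).symm
    · have hji : j = i + 1 := by
        have h1 : j - i = 1 := Fin.ext (by rw [h, hone])
        have := sub_eq_iff_eq_add.mp h1
        rwa [add_comm] at this
      have hjval : j.val = (i.val + 1) % p := by rw [hji, hvadd]
      have : f j.val = f (i.val + 1) := by
        rw [hjval, ← hmod]
      rw [this]
      exact hadj i.val

end Cycle

section Swap
variable {V : Type*} {G : SimpleGraph V}
open Sum

lemma bool_flip {a b : Bool} (h : a = !b) : b = !a := by revert h; revert a b; decide

lemma exists_inr_of_isLeft_false {α β : Type*} {x : α ⊕ β} (h : x.isLeft = false) :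
    ∃ e, x = inr e := by
  cases x with
  | inl a => simp at h
  | inr e => exact ⟨e, rfl⟩

lemma exists_inl_of_isLeft_true {α β : Type*} {x : α ⊕ β} (h : x.isLeft = true) :
    ∃ a, x = inl a := by
  cases x with
  | inl a => exact ⟨a, rfl⟩
  | inr e => simp at h

lemma edge_two (e : G.edgeSet) : ∃ x y, x ≠ y ∧ (e : Sym2 V) = s(x, y) := by
  obtain ⟨z, hz⟩ := e
  induction z using Sym2.ind with
  | _ a b => exact ⟨a, b, (G.mem_edgeSet.mp hz).ne, rfl⟩

lemma symm_isLeft (φ : subdivisionGraph G ≃g subdivisionGraph G)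
    (hsw : ∀ x : V ⊕ G.edgeSet, (φ x).isLeft = !x.isLeft) :
    ∀ x : V ⊕ G.edgeSet, (φ.symm x).isLeft = !x.isLeft := by
  intro x
  have h := hsw (φ.symm x)
  rw [RelIso.apply_symm_apply] at h
  exact bool_flip h

lemma swap_deg (φ : subdivisionGraph G ≃g subdivisionGraph G)
    (hsw : ∀ x : V ⊕ G.edgeSet, (φ x).isLeft = !x.isLeft) :
    ∀ v : V, ∃ a b : V, a ≠ b ∧ G.neighborSet v = {a, b} := by
  intro v
  obtain ⟨e, hφv⟩ := exists_inr_of_isLeft_false (x := φ (inl v)) (by rw [hsw]; rfl)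
  obtain ⟨x, y, hxy, hexy⟩ := edge_two e
  have hsymm := symm_isLeft φ hsw
  obtain ⟨e1, he1⟩ := exists_inr_of_isLeft_false (x := φ.symm (inl x)) (by rw [hsymm]; rfl)
  obtain ⟨e2, he2⟩ := exists_inr_of_isLeft_false (x := φ.symm (inl y)) (by rw [hsymm]; rfl)
  have hsymm_e : φ.symm (inr e) = inl v := by
    rw [← hφv, RelIso.symm_apply_apply]
  have hve1 : v ∈ (e1 : Sym2 V) := by
    have hx : (subdivisionGraph G).Adj (inl x) (inr e) := by
      rw [sadj_inl_inr, hexy]; simp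
    have := (φ.symm.map_adj_iff (v := inl x) (w := inr e)).mpr hx
    rw [he1, hsymm_e] at this
    exact sadj_inr_inl.mp this
  have hve2 : v ∈ (e2 : Sym2 V) := by
    have hy : (subdivisionGraph G).Adj (inl y) (inr e) := by
      rw [sadj_inl_inr, hexy]; simp
    have := (φ.symm.map_adj_iff (v := inl y) (w := inr e)).mpr hy
    rw [he2, hsymm_e] at this
    exact sadj_inr_inl.mp this
  have he12 : e1 ≠ e2 := by
    intro h
    apply hxy
    have : φ.symm (inl x) = φ.symm (inl y) := by rw [he1, he2, h]
    exact inl.inj (φ.symm.injective this)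
  set a := Sym2.Mem.other hve1 with hadef
  set b := Sym2.Mem.other hve2 with hbdef
  have hspec1 : s(v, a) = (e1 : Sym2 V) := Sym2.other_spec hve1
  have hspec2 : s(v, b) = (e2 : Sym2 V) := Sym2.other_spec hve2
  have hadj_a : G.Adj v a := by
    rw [← SimpleGraph.mem_edgeSet, hspec1]; exact e1.2
  have hadj_b : G.Adj v b := by
    rw [← SimpleGraph.mem_edgeSet, hspec2]; exact e2.2
  have hab : a ≠ b := by
    intro h
    apply he12
    apply Subtype.ext
    rw [← hspec1, ← hspec2, h]
  refine ⟨a, b, hab, ?_⟩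
  apply Set.eq_of_subset_of_subset
  · intro u hu
    have hadj_u : G.Adj v u := hu
    have heu : s(v, u) ∈ G.edgeSet := hadj_u
    have hS : (subdivisionGraph G).Adj (inl v) (inr ⟨s(v,u), heu⟩) := by
      rw [sadj_inl_inr]; simp
    have hmapped := (φ.map_adj_iff (v := inl v) (w := inr ⟨s(v,u), heu⟩)).mpr hS
    rw [hφv] at hmapped
    obtain ⟨z, hz⟩ := exists_inl_of_isLeft_true
      (x := φ (inr (⟨s(v,u), heu⟩ : G.edgeSet))) (by rw [hsw]; rfl)
    rw [hz] at hmapped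
    have hz_mem : z ∈ (e : Sym2 V) := sadj_inr_inl.mp hmapped
    rw [hexy, Sym2.mem_iff] at hz_mem
    rcases hz_mem with rfl | rfl
    · -- z = x : the incident edge is e1, so u = a
      have : (inr (⟨s(v,u), heu⟩ : G.edgeSet) : V ⊕ G.edgeSet) = inr e1 := by
        rw [← he1, ← hz, RelIso.symm_apply_apply]
      have hval : s(v, u) = (e1 : Sym2 V) := congrArg Subtype.val (inr.inj this)
      have : u = a := Sym2.congr_right.mp (hval.trans hspec1.symm)
      rw [this]; exact Set.mem_insert _ _
    · have : (inr (⟨s(v,u), heu⟩ : G.edgeSet) : V ⊕ G.edgeSet) = inr e2 := by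
        rw [← he2, ← hz, RelIso.symm_apply_apply]
      have hval : s(v, u) = (e2 : Sym2 V) := congrArg Subtype.val (inr.inj this)
      have : u = b := Sym2.congr_right.mp (hval.trans hspec2.symm)
      rw [this]; exact Set.mem_insert_of_mem _ rfl
  · rintro u (rfl | rfl)
    · exact hadj_a
    · exact hadj_b

end Swap

section Pres
variable {V : Type*} {G : SimpleGraph V}
open Sum

lemma pres_mem (φ : subdivisionGraph G ≃g subdivisionGraph G)
    (σ : V → V) (hσ : ∀ v, φ (inl v) = inl (σ v))
    (τ : G.edgeSet → G.edgeSet) (hτ : ∀ e, φ (inr e) = inr (τ e))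
    (v : V) (e : G.edgeSet) (hv : v ∈ (e : Sym2 V)) : σ v ∈ (τ e : Sym2 V) := by
  have h := (φ.map_adj_iff (v := inl v) (w := inr e)).mpr (sadj_inl_inr.mpr hv)
  rw [hσ, hτ] at h
  exact sadj_inl_inr.mp h

lemma pres_edge (φ : subdivisionGraph G ≃g subdivisionGraph G)
    (σ : V → V) (hσ : ∀ v, φ (inl v) = inl (σ v))
    (τ : G.edgeSet → G.edgeSet) (hτ : ∀ e, φ (inr e) = inr (τ e))
    (e : G.edgeSet) : (τ e : Sym2 V) = Sym2.map σ (e : Sym2 V) := by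
  obtain ⟨x, y, hxy, hexy⟩ := edge_two e
  have hx := pres_mem φ σ hσ τ hτ x e (by rw [hexy]; simp)
  have hy := pres_mem φ σ hσ τ hτ y e (by rw [hexy]; simp)
  have hσxy : σ x ≠ σ y := by
    intro h
    apply hxy
    have : φ (inl x) = φ (inl y) := by rw [hσ, hσ, h]
    exact inl.inj (φ.toEquiv.injective this)
  rw [hexy, Sym2.map_pair_eq]
  exact (Sym2.mem_and_mem_iff hσxy).mp ⟨hx, hy⟩

lemma pres_adj (φ : subdivisionGraph G ≃g subdivisionGraph G)
    (σ : V → V) (hσ : ∀ v, φ (inl v) = inl (σ v))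
    (τ : G.edgeSet → G.edgeSet) (hτ : ∀ e, φ (inr e) = inr (τ e))
    {a b : V} (hab : G.Adj a b) : G.Adj (σ a) (σ b) := by
  have he : s(a, b) ∈ G.edgeSet := hab
  have hE := pres_edge φ σ hσ τ hτ ⟨s(a,b), he⟩
  rw [← SimpleGraph.mem_edgeSet, ← Sym2.map_pair_eq σ]
  have : Sym2.map σ ((⟨s(a,b), he⟩ : G.edgeSet) : Sym2 V) = Sym2.map σ s(a,b) := rfl
  rw [← this, ← hE]
  exact (τ _).2

end Pres

lemma beq_eq_false {a b : Bool} (h : (a == b) = false) : a = !b := by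
  revert h; revert a b; decide

lemma beq_eq_true {a b : Bool} (h : (a == b) = true) : a = b := by
  revert h; revert a b; decide

open Sum in
/-- For a finite simple connected graph `G` of order `≥ 3` that is not
isomorphic to any cycle, `D(S(G)) ≤ D''(G)`. -/
theorem distinguishingNumber_subdivision_le_totalDistinguishingNumber
    {V : Type*} [Fintype V] (G : SimpleGraph V)
    (hconn : G.Connected) (hcard : 3 ≤ Fintype.card V)
    (hcyc : ∀ m : ℕ, IsEmpty (G ≃g cycleGraph m)) :
    distinguishingNumber (subdivisionGraph G) ≤ totalDistinguishingNumber G := by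
  classical
  haveI hVne : Nonempty V := Fintype.card_pos_iff.mp (by omega)
  -- the defining set of the total distinguishing number is nonempty
  have htot : {d | ∃ (cV : V → Fin d) (cE : G.edgeSet → Fin d),
      ∀ φ : G ≃g G,
        ((∀ v, cV (φ v) = cV v) ∧ (∀ e, cE (φ.mapEdgeSet e) = cE e)) → ∀ v, φ v = v}.Nonempty := by
    refine ⟨Fintype.card V, ⇑(Fintype.equivFin V), fun _ => ⟨0, by omega⟩, ?_⟩
    intro φ hφ v
    exact (Fintype.equivFin V).injective (hφ.1 v)
  obtain ⟨cV, cE, hkey⟩ := Nat.sInf_mem htot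
  apply Nat.sInf_le
  refine ⟨Sum.elim cV cE, ?_⟩
  intro φ hc
  -- parity dichotomy
  have v₀ : V := Classical.arbitrary V
  cases hq0 : ((φ (inl v₀)).isLeft == (inl v₀ : V ⊕ G.edgeSet).isLeft) with
  | false =>
    -- the automorphism swaps the two parts: all degrees are 2, contradiction
    exfalso
    have hsw : ∀ x : V ⊕ G.edgeSet, (φ x).isLeft = !x.isLeft := by
      intro x
      have h := parity_const hconn φ x (inl v₀)
      rw [hq0] at h
      exact beq_eq_false h
    obtain ⟨n, ⟨iso⟩⟩ := two_regular_cycle hconn (swap_deg φ hsw)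
    exact (hcyc n).false iso
  | true =>
    have hpr : ∀ x : V ⊕ G.edgeSet, (φ x).isLeft = x.isLeft := by
      intro x
      have h := parity_const hconn φ x (inl v₀)
      rw [hq0] at h
      exact beq_eq_true h
    have hL : ∀ v : V, ∃ u, φ (inl v) = inl u := fun v =>
      exists_inl_of_isLeft_true (by rw [hpr]; rfl)
    have hR : ∀ e, ∃ f', φ (inr e) = inr f' := fun e =>
      exists_inr_of_isLeft_false (by rw [hpr]; rfl)
    choose σ hσ using hL
    choose τ hτ using hR
    have hL' : ∀ v : V, ∃ u, φ.symm (inl v) = inl u := by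
      intro v
      cases hx : φ.symm (inl v) with
      | inl u => exact ⟨u, rfl⟩
      | inr e =>
        exfalso
        have h1 : φ (φ.symm (inl v)) = inl v := RelIso.apply_symm_apply φ _
        rw [hx, hτ e] at h1
        simp at h1
    have hR' : ∀ e, ∃ f', φ.symm (inr e) = inr f' := by
      intro e
      cases hx : φ.symm (inr e) with
      | inr f' => exact ⟨f', rfl⟩
      | inl u =>
        exfalso
        have h1 : φ (φ.symm (inr e)) = inr e := RelIso.apply_symm_apply φ _
        rw [hx, hσ u] at h1
        simp at h1
    choose σ' hσ' using hL'
    choose τ' hτ' using hR'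
    have hlr : ∀ v, σ' (σ v) = v := by
      intro v
      have : φ.symm (inl (σ v)) = inl v := by
        rw [← hσ v, RelIso.symm_apply_apply]
      rw [hσ' (σ v)] at this
      exact inl.inj this
    have hrl : ∀ v, σ (σ' v) = v := by
      intro v
      have : φ (inl (σ' v)) = inl v := by
        rw [← hσ' v, RelIso.apply_symm_apply]
      rw [hσ (σ' v)] at this
      exact inl.inj this
    have hiff : ∀ a b, G.Adj (σ a) (σ b) ↔ G.Adj a b := by
      intro a b
      constructor
      · intro h
        have h2 := pres_adj φ.symm σ' hσ' τ' hτ' h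
        rwa [hlr, hlr] at h2
      · exact fun h => pres_adj φ σ hσ τ hτ h
    let ψ : G ≃g G := ⟨⟨σ, σ', hlr, hrl⟩, @fun a b => hiff a b⟩
    have hmapE : ∀ e, ψ.mapEdgeSet e = τ e := by
      intro e
      apply Subtype.ext
      have h1 : ((ψ.mapEdgeSet e : G.edgeSet) : Sym2 V) = Sym2.map σ (e : Sym2 V) := rfl
      rw [h1, pres_edge φ σ hσ τ hτ e]
    have h1 : ∀ v, cV (ψ v) = cV v := by
      intro v
      have h := hc (inl v)
      rw [hσ v] at h
      exact h
    have h2 : ∀ e, cE (ψ.mapEdgeSet e) = cE e := by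
      intro e
      rw [hmapE]
      have h := hc (inr e)
      rw [hτ e] at h
      exact h
    have hid := hkey ψ ⟨h1, h2⟩
    intro x
    cases x with
    | inl v => rw [hσ v]; exact congrArg inl (hid v)
    | inr e =>
      rw [hτ e]
      congr 1
      apply Subtype.ext
      rw [pres_edge φ σ hσ τ hτ e]
      have hσid : σ = id := funext fun v => hid v
      rw [hσid, Sym2.map_id, id]
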